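/- Let α be a positive transcendental real number and let β be a positive real number that is transcendental over the field ℚ(α) (i.e. β is not algebraic over ℚ(α)). Let G = { (f(α), l₁ + l₂·β) : f ∈ ℤ[t, t⁻¹], l₁, l₂ ∈ ℤ }, i.e. the subgroup of ℝ² whose first coordinates range over the ring ℤ[α, α⁻¹] of integer Laurent polynomial values at α and whose second coordinates range over ℤ + ℤβ. Then I(G) = { [[α^n,0],[0,1]] : n ∈ ℤ }. -/

import Mathlib

open Polynomial

lemma aux_quad (β : ℝ) (htr : Transcendental ℚ β) (c₀ c₁ c₂ : ℤ)
    (h : (c₀ : ℝ) + c₁ * β + c₂ * β ^ 2 = 0) : c₀ = 0 ∧ c₁ = 0 ∧ c₂ = 0 := by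
  set p : ℚ[X] := C (c₀ : ℚ) + C (c₁ : ℚ) * X + C (c₂ : ℚ) * X ^ 2 with hp
  have hev : Polynomial.aeval β p = 0 := by
    simp [hp, map_add, map_mul]
    linarith
  have hp0 : p = 0 := by
    by_contra hne
    exact htr ⟨p, hne, hev⟩
  have h0 : p.coeff 0 = (c₀ : ℚ) := by
    simp only [hp, coeff_add, coeff_C_mul, coeff_X_pow, coeff_C, coeff_X]; norm_num
  have h1 : p.coeff 1 = (c₁ : ℚ) := by
    simp only [hp, coeff_add, coeff_C_mul, coeff_X_pow, coeff_C, coeff_X]; norm_num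
  have h2 : p.coeff 2 = (c₂ : ℚ) := by
    simp only [hp, coeff_add, coeff_C_mul, coeff_X_pow, coeff_C, coeff_X]; norm_num
  rw [hp0, coeff_zero] at h0 h1 h2
  refine ⟨?_, ?_, ?_⟩ <;> [exact_mod_cast h0.symm; exact_mod_cast h1.symm; exact_mod_cast h2.symm]

lemma aux_S_mem (α : ℝ) (hα : α ≠ 0) {x : ℝ}
    (hx : x ∈ Subring.closure ({α, α⁻¹} : Set ℝ)) :
    ∃ (n : ℕ) (p : Polynomial ℤ), x * α ^ n = Polynomial.aeval α p := by
  induction hx using Subring.closure_induction with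
  | mem x hx =>
    rcases hx with rfl | hx
    · exact ⟨0, X, by simp⟩
    · rw [Set.mem_singleton_iff] at hx
      subst hx
      exact ⟨1, 1, by simp [inv_mul_cancel₀ hα]⟩
  | zero => exact ⟨0, 0, by simp⟩
  | one => exact ⟨0, 1, by simp⟩
  | add x y hx hy ihx ihy =>
    obtain ⟨n, p, hnp⟩ := ihx
    obtain ⟨m, q, hmq⟩ := ihy
    refine ⟨n + m, p * X ^ m + q * X ^ n, ?_⟩
    have : (x + y) * α ^ (n + m) = (x * α ^ n) * α ^ m + (y * α ^ m) * α ^ n := by ring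
    rw [this, hnp, hmq]
    simp [mul_comm]
  | neg x hx ihx =>
    obtain ⟨n, p, hnp⟩ := ihx
    exact ⟨n, -p, by simp [← hnp]⟩
  | mul x y hx hy ihx ihy =>
    obtain ⟨n, p, hnp⟩ := ihx
    obtain ⟨m, q, hmq⟩ := ihy
    refine ⟨n + m, p * q, ?_⟩
    have : (x * y) * α ^ (n + m) = (x * α ^ n) * (y * α ^ m) := by ring
    rw [this, hnp, hmq, map_mul]

lemma aux_zpow_mem (α : ℝ) (n : ℤ) : α ^ n ∈ Subring.closure ({α, α⁻¹} : Set ℝ) := by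
  have hαS : α ∈ Subring.closure ({α, α⁻¹} : Set ℝ) :=
    Subring.subset_closure (by simp)
  have hαiS : α⁻¹ ∈ Subring.closure ({α, α⁻¹} : Set ℝ) :=
    Subring.subset_closure (by simp)
  rcases n with k | k
  · simpa using pow_mem hαS k
  · rw [zpow_negSucc, ← inv_pow]
    exact pow_mem hαiS _

lemma aux_unit (α : ℝ) (hα : 0 < α) (htrα : Transcendental ℚ α) {a : ℝ} (ha : 0 < a)
    (haS : a ∈ Subring.closure ({α, α⁻¹} : Set ℝ))
    (haS' : a⁻¹ ∈ Subring.closure ({α, α⁻¹} : Set ℝ)) :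
    ∃ n : ℤ, a = α ^ n := by
  have hα0 : α ≠ 0 := ne_of_gt hα
  have ha0 : a ≠ 0 := ne_of_gt ha
  obtain ⟨j, p, hp⟩ := aux_S_mem α hα0 haS
  obtain ⟨k, q, hq⟩ := aux_S_mem α hα0 haS'
  have htrZ : Transcendental ℤ α :=
    fun h => htrα (h.extendScalars (S := ℚ) (algebraMap ℤ ℚ).injective_int)
  have hpq : p * q = (X : ℤ[X]) ^ (j + k) := by
    by_contra hne
    refine htrZ ⟨p * q - X ^ (j + k), sub_ne_zero.mpr hne, ?_⟩
    have : Polynomial.aeval α (p * q) = α ^ (j + k) := by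
      rw [map_mul, ← hp, ← hq]
      field_simp
      ring
    rw [map_sub, this, map_pow, aeval_X]; ring
  have hdvd : p ∣ (X : ℤ[X]) ^ (j + k) := ⟨q, hpq.symm⟩
  obtain ⟨i, hi, hassoc⟩ := (dvd_prime_pow Polynomial.prime_X (j + k)).mp hdvd
  obtain ⟨u, hu⟩ := hassoc
  obtain ⟨r, hr, hCr⟩ := Polynomial.isUnit_iff.mp u.isUnit
  rcases Int.isUnit_iff.mp hr with rfl | rfl
  · have hu1 : (u : ℤ[X]) = 1 := by rw [← hCr]; simp
    rw [hu1, mul_one] at hu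
    have : a * α ^ j = α ^ i := by rw [hp, hu]; simp
    refine ⟨(i : ℤ) - j, ?_⟩
    rw [zpow_sub₀ hα0, zpow_natCast, zpow_natCast, eq_div_iff (by positivity)]
    exact this
  · have hu1 : (u : ℤ[X]) = -1 := by rw [← hCr]; simp
    rw [hu1, mul_neg_one] at hu
    have : a * α ^ j = -α ^ i := by
      rw [hp, ← neg_neg p, map_neg, hu]; simp
    nlinarith [pow_pos hα j, pow_pos hα i]

/-- For an additive subgroup `G` of `ℝ²` (elements viewed as row vectors), `IG G` is the
set of invertible real `2 × 2` matrices `B` of the form `[[a,0],[0,b]]` or `[[0,a],[b,0]]`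
with `a > 0`, `b > 0`, such that right multiplication by `B` maps `G` onto `G`. -/
def IG (G : AddSubgroup (Fin 2 → ℝ)) : Set (Matrix (Fin 2) (Fin 2) ℝ) :=
  {B | IsUnit B ∧
    (∃ a b : ℝ, 0 < a ∧ 0 < b ∧
      (B = Matrix.of ![![a, 0], ![0, b]] ∨ B = Matrix.of ![![0, a], ![b, 0]])) ∧
    (fun v => Matrix.vecMul v B) '' (G : Set (Fin 2 → ℝ)) = (G : Set (Fin 2 → ℝ))}

theorem stmt3 (α β : ℝ) (hα : 0 < α) (htrα : Transcendental ℚ α) (hβ : 0 < β)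
    (htrβ : Transcendental (IntermediateField.adjoin ℚ ({α} : Set ℝ)) β)
    (G : AddSubgroup (Fin 2 → ℝ))
    (hG : (G : Set (Fin 2 → ℝ)) =
      {v | v 0 ∈ Subring.closure ({α, α⁻¹} : Set ℝ) ∧ ∃ l₁ l₂ : ℤ, v 1 = l₁ + l₂ * β}) :
    IG G = {B | ∃ n : ℤ, B = Matrix.of ![![α ^ n, 0], ![0, 1]]} := by
  have hα0 : α ≠ 0 := ne_of_gt hα
  set S := Subring.closure ({α, α⁻¹} : Set ℝ) with hS
  have hmem : ∀ v : Fin 2 → ℝ, v ∈ G ↔ (v 0 ∈ S ∧ ∃ l₁ l₂ : ℤ, v 1 = l₁ + l₂ * β) := by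
    intro v
    rw [← SetLike.mem_coe, hG]
    exact Iff.rfl
  have hvecD : ∀ (v : Fin 2 → ℝ) (a b : ℝ),
      Matrix.vecMul v (Matrix.of ![![a, 0], ![0, b]]) = ![v 0 * a, v 1 * b] := by
    intro v a b
    funext i
    fin_cases i <;>
      simp [Matrix.vecMul, dotProduct, Fin.sum_univ_two]
  have hvecA : ∀ (v : Fin 2 → ℝ) (a b : ℝ),
      Matrix.vecMul v (Matrix.of ![![0, a], ![b, 0]]) = ![v 1 * b, v 0 * a] := by
    intro v a b
    funext i
    fin_cases i <;>
      simp [Matrix.vecMul, dotProduct, Fin.sum_univ_two]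
  have htrβQ : Transcendental ℚ β := fun h => htrβ (h.tower_top _)
  ext B
  constructor
  · rintro ⟨hBu, ⟨a, b, ha, hb, hform⟩, himg⟩
    have hfwd : ∀ v : Fin 2 → ℝ, v ∈ G → Matrix.vecMul v B ∈ G := by
      intro v hv
      have : Matrix.vecMul v B ∈ (fun v => Matrix.vecMul v B) '' (G : Set (Fin 2 → ℝ)) :=
        Set.mem_image_of_mem _ hv
      rw [himg] at this
      exact this
    have hbwd : ∀ w : Fin 2 → ℝ, w ∈ G → ∃ v, v ∈ G ∧ Matrix.vecMul v B = w := by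
      intro w hw
      have : w ∈ (fun v => Matrix.vecMul v B) '' (G : Set (Fin 2 → ℝ)) := by
        rw [himg]; exact hw
      obtain ⟨v, hv, hveq⟩ := this
      exact ⟨v, hv, hveq⟩
    have h10 : (![1, 0] : Fin 2 → ℝ) ∈ G := by
      rw [hmem]
      refine ⟨by simp [one_mem], 0, 0, by simp⟩
    have h01 : (![0, 1] : Fin 2 → ℝ) ∈ G := by
      rw [hmem]
      refine ⟨by simp [zero_mem], 1, 0, by simp⟩
    have h0β : (![0, β] : Fin 2 → ℝ) ∈ G := by
      rw [hmem]
      refine ⟨by simp [zero_mem], 0, 1, by simp⟩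
    rcases hform with hd | hd
    · -- diagonal case
      subst hd
      -- a ∈ S
      have haS : a ∈ S := by
        have := hfwd _ h10
        rw [hmem, hvecD] at this
        simpa using this.1
      have haS' : a⁻¹ ∈ S := by
        obtain ⟨v, hv, hveq⟩ := hbwd _ h10
        rw [hvecD] at hveq
        have h00 : v 0 * a = 1 := by
          have := congrFun hveq 0
          simpa using this
        have : v 0 = a⁻¹ := eq_inv_of_mul_eq_one_left h00
        rw [← this]
        exact ((hmem v).mp hv).1
      obtain ⟨n, hae⟩ := aux_unit α hα htrα ha haS haS'
      -- b = 1
      have hbL : ∃ m₁ m₂ : ℤ, b = m₁ + m₂ * β := by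
        have := hfwd _ h01
        rw [hmem, hvecD] at this
        obtain ⟨m₁, m₂, hm⟩ := this.2
        exact ⟨m₁, m₂, by simpa using hm⟩
      have hbβL : ∃ k₁ k₂ : ℤ, β * b = k₁ + k₂ * β := by
        have := hfwd _ h0β
        rw [hmem, hvecD] at this
        obtain ⟨k₁, k₂, hk⟩ := this.2
        exact ⟨k₁, k₂, by simpa using hk⟩
      obtain ⟨m₁, m₂, hm⟩ := hbL
      obtain ⟨k₁, k₂, hk⟩ := hbβL
      have hm2 : m₂ = 0 ∧ m₁ - k₂ = 0 := by
        have heq : ((-k₁ : ℤ) : ℝ) + (m₁ - k₂ : ℤ) * β + (m₂ : ℤ) * β ^ 2 = 0 := by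
          push_cast
          nlinarith [hk, hm]
        have := aux_quad β htrβQ (-k₁) (m₁ - k₂) m₂ heq
        exact ⟨this.2.2, this.2.1⟩
      have hbm : b = (m₁ : ℝ) := by rw [hm, hm2.1]; push_cast; ring
      -- 1 ∈ bL
      obtain ⟨v, hv, hveq⟩ := hbwd _ h01
      rw [hvecD] at hveq
      have h11 : v 1 * b = 1 := by
        have := congrFun hveq 1
        simpa using this
      obtain ⟨l₁, l₂, hl⟩ := ((hmem v).mp hv).2
      have hlb : ((l₁ * m₁ - 1 : ℤ) : ℝ) + (l₂ * m₁ : ℤ) * β + (0 : ℤ) * β ^ 2 = 0 := by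
        push_cast
        rw [hl, hbm] at h11
        nlinarith [h11]
      have hquad := aux_quad β htrβQ (l₁ * m₁ - 1) (l₂ * m₁) 0 hlb
      have hm1unit : IsUnit m₁ := IsUnit.of_mul_eq_one (a := m₁) l₁ (by linarith [hquad.1, mul_comm l₁ m₁])
      have hb1 : b = 1 := by
        rcases Int.isUnit_iff.mp hm1unit with h1 | h1
        · rw [hbm, h1]; norm_num
        · exfalso
          rw [hbm, h1] at hb
          norm_num at hb
      exact ⟨n, by rw [hae, hb1]⟩
    · -- antidiagonal case: contradiction
      exfalso
      subst hd
      have hbS : b ∈ S := by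
        have := hfwd _ h01
        rw [hmem, hvecA] at this
        simpa using this.1
      have hbβS : β * b ∈ S := by
        have := hfwd _ h0β
        rw [hmem, hvecA] at this
        simpa using this.1
      set K := IntermediateField.adjoin ℚ ({α} : Set ℝ) with hK
      have hSK : ∀ x ∈ S, x ∈ K := by
        intro x hx
        have hsub : S ≤ K.toSubfield.toSubring := by
          rw [hS]
          apply Subring.closure_le.mpr
          intro y hy
          rcases hy with rfl | hy
          · exact IntermediateField.subset_adjoin ℚ _ (Set.mem_singleton _)
          · rw [Set.mem_singleton_iff] at hy
            subst hy
            exact K.inv_mem (IntermediateField.subset_adjoin ℚ _ (Set.mem_singleton _))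
        exact hsub hx
      have hβK : β ∈ K := by
        have : β = (β * b) * b⁻¹ := by field_simp
        rw [this]
        exact mul_mem (hSK _ hbβS) (K.inv_mem (hSK _ hbS))
      exact htrβ (isAlgebraic_algebraMap (⟨β, hβK⟩ : K))
  · rintro ⟨n, rfl⟩
    refine ⟨?_, ⟨α ^ n, 1, zpow_pos hα n, one_pos, Or.inl rfl⟩, ?_⟩
    · rw [Matrix.isUnit_iff_isUnit_det, Matrix.det_fin_two_of]
      simp [isUnit_iff_ne_zero, zpow_ne_zero, hα0]
    · ext w
      constructor
      · rintro ⟨v, hv, rfl⟩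
        show Matrix.vecMul v (Matrix.of ![![α ^ n, 0], ![0, 1]]) ∈ (G : Set (Fin 2 → ℝ))
        rw [hvecD]
        rw [SetLike.mem_coe] at hv ⊢
        rw [hmem] at hv ⊢
        obtain ⟨hv0, l₁, l₂, hv1⟩ := hv
        refine ⟨by simpa using mul_mem hv0 (aux_zpow_mem α n), l₁, l₂, by simpa using hv1⟩
      · intro hw
        rw [SetLike.mem_coe, hmem] at hw
        obtain ⟨hw0, l₁, l₂, hw1⟩ := hw
        refine ⟨![w 0 * α ^ (-n), w 1], ?_, ?_⟩
        · rw [SetLike.mem_coe, hmem]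
          exact ⟨by simpa using mul_mem hw0 (aux_zpow_mem α (-n)), l₁, l₂, by simpa using hw1⟩
        · show Matrix.vecMul ![w 0 * α ^ (-n), w 1] (Matrix.of ![![α ^ n, 0], ![0, 1]]) = w
          rw [hvecD]
          funext i
          fin_cases i <;> simp [mul_assoc, inv_mul_cancel₀ (zpow_ne_zero n hα0)]
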